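/- For real parameters m > 0, ε > 0, λ > 0, δ ≥ 0, σ ∈ ℝ, define b(t) := (2mλε - δλ^{2σ})t - ε sin(2mλt), w(t) := sin(mλt)·exp(b(t)), and γ(t) := m² + δ²/λ^{2-4σ} - 16m²ε² sin⁴(mλt) - 8m²ε sin(2mλt). Then w satisfies the differential equation w''(t) + 2δλ^{2σ} w'(t) + λ² γ(t) w(t) = 0 for all t ∈ ℝ. -/

import Mathlib

theorem stmt9 (m ε l δ σ : ℝ) (hm : 0 < m) (hε : 0 < ε) (hl : 0 < l) (hδ : 0 ≤ δ)
    (b w γ : ℝ → ℝ)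
    (hb : ∀ t, b t = (2 * m * l * ε - δ * l ^ (2*σ)) * t - ε * Real.sin (2 * m * l * t))
    (hw : ∀ t, w t = Real.sin (m * l * t) * Real.exp (b t))
    (hγ : ∀ t, γ t = m ^ 2 + δ ^ 2 / l ^ (2 - 4*σ)
        - 16 * m ^ 2 * ε ^ 2 * Real.sin (m * l * t) ^ 4
        - 8 * m ^ 2 * ε * Real.sin (2 * m * l * t)) :
    ∀ t : ℝ, deriv (deriv w) t + 2 * δ * l ^ (2*σ) * deriv w t + l ^ 2 * γ t * w t = 0 := by
  set c : ℝ := 2 * m * l * ε - δ * l ^ (2*σ) with hc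
  set B : ℝ → ℝ := fun x => Real.exp (b x) with hB
  -- derivative of b
  have hbd : ∀ x : ℝ, HasDerivAt b (c - ε * (Real.cos (2*m*l*x) * (2*m*l))) x := by
    intro x
    have h2 : HasDerivAt (fun t : ℝ => 2*m*l*t) (2*m*l) x := by
      simpa using (hasDerivAt_id x).const_mul (2*m*l)
    have hs2 : HasDerivAt (fun t : ℝ => Real.sin (2*m*l*t)) (Real.cos (2*m*l*x) * (2*m*l)) x :=
      (Real.hasDerivAt_sin _).comp x h2
    have hct : HasDerivAt (fun t : ℝ => c * t) c x := by
      simpa using (hasDerivAt_id x).const_mul c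
    have := hct.sub (hs2.const_mul ε)
    have hbe : b = fun t => c * t - ε * Real.sin (2*m*l*t) := funext hb
    rw [hbe]
    exact this
  have hBd : ∀ x : ℝ, HasDerivAt B (Real.exp (b x) * (c - ε * (Real.cos (2*m*l*x) * (2*m*l)))) x :=
    fun x => (hbd x).exp
  have hml : ∀ x : ℝ, HasDerivAt (fun t : ℝ => m*l*t) (m*l) x := by
    intro x; simpa using (hasDerivAt_id x).const_mul (m*l)
  have hsin : ∀ x : ℝ, HasDerivAt (fun t : ℝ => Real.sin (m*l*t)) (Real.cos (m*l*x) * (m*l)) x :=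
    fun x => (Real.hasDerivAt_sin _).comp x (hml x)
  have hcos : ∀ x : ℝ, HasDerivAt (fun t : ℝ => Real.cos (m*l*t)) (-Real.sin (m*l*x) * (m*l)) x :=
    fun x => (Real.hasDerivAt_cos _).comp x (hml x)
  have hcos2 : ∀ x : ℝ, HasDerivAt (fun t : ℝ => Real.cos (2*m*l*t)) (-Real.sin (2*m*l*x) * (2*m*l)) x := by
    intro x
    have h2 : HasDerivAt (fun t : ℝ => 2*m*l*t) (2*m*l) x := by
      simpa using (hasDerivAt_id x).const_mul (2*m*l)
    exact (Real.hasDerivAt_cos _).comp x h2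
  -- first derivative of w
  set w1 : ℝ → ℝ := fun x =>
    Real.cos (m*l*x) * (m*l) * Real.exp (b x)
      + Real.sin (m*l*x) * (Real.exp (b x) * (c - ε * (Real.cos (2*m*l*x) * (2*m*l)))) with hw1def
  have hwd : ∀ x : ℝ, HasDerivAt w (w1 x) x := by
    intro x
    have hwe : w = fun t => Real.sin (m*l*t) * Real.exp (b t) := funext hw
    rw [hwe]
    exact (hsin x).mul (hBd x)
  have hdw : deriv w = w1 := funext fun x => (hwd x).deriv
  -- second derivative
  intro t
  have hw2 : HasDerivAt w1
      ((-Real.sin (m*l*t) * (m*l) * (m*l) * Real.exp (b t)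
        + Real.cos (m*l*t) * (m*l) * (Real.exp (b t) * (c - ε * (Real.cos (2*m*l*t) * (2*m*l)))))
        + (Real.cos (m*l*t) * (m*l) *
            (Real.exp (b t) * (c - ε * (Real.cos (2*m*l*t) * (2*m*l))))
          + Real.sin (m*l*t) *
            (Real.exp (b t) * (c - ε * (Real.cos (2*m*l*t) * (2*m*l))) *
              (c - ε * (Real.cos (2*m*l*t) * (2*m*l)))
             + Real.exp (b t) * (- (ε * (-Real.sin (2*m*l*t) * (2*m*l) * (2*m*l))))))) t := by
    have h1 : HasDerivAt (fun x : ℝ => Real.cos (m*l*x) * (m*l) * Real.exp (b x))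
        (-Real.sin (m*l*t) * (m*l) * (m*l) * Real.exp (b t)
          + Real.cos (m*l*t) * (m*l) * (Real.exp (b t) * (c - ε * (Real.cos (2*m*l*t) * (2*m*l))))) t :=
      ((hcos t).mul_const (m*l)).mul (hBd t)
    have hB1 : HasDerivAt (fun x : ℝ => c - ε * (Real.cos (2*m*l*x) * (2*m*l)))
        (- (ε * (-Real.sin (2*m*l*t) * (2*m*l) * (2*m*l)))) t := by
      exact (((hcos2 t).mul_const (2*m*l)).const_mul ε).const_sub c
    have h2 : HasDerivAt (fun x : ℝ =>
        Real.sin (m*l*x) * (Real.exp (b x) * (c - ε * (Real.cos (2*m*l*x) * (2*m*l)))))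
        (Real.cos (m*l*t) * (m*l) *
            (Real.exp (b t) * (c - ε * (Real.cos (2*m*l*t) * (2*m*l))))
          + Real.sin (m*l*t) *
            (Real.exp (b t) * (c - ε * (Real.cos (2*m*l*t) * (2*m*l))) *
              (c - ε * (Real.cos (2*m*l*t) * (2*m*l)))
             + Real.exp (b t) * (- (ε * (-Real.sin (2*m*l*t) * (2*m*l) * (2*m*l)))))) t :=
      (hsin t).mul ((hBd t).mul hB1)
    exact h1.add h2
  rw [hdw]
  rw [hw2.deriv, hw (t), hγ t]
  simp only [hw1def]
  -- power identity
  have hApos : (0:ℝ) < l ^ (2*σ) := Real.rpow_pos_of_pos hl _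
  have hpow : l ^ ((2:ℝ) - 4*σ) * (l ^ (2*σ))^2 = l ^ 2 := by
    rw [sq, ← Real.rpow_add hl, ← Real.rpow_add hl, ← Real.rpow_natCast l 2]
    congr 1
    push_cast
    ring
  have hdiv : δ ^ 2 / l ^ ((2:ℝ) - 4*σ) = δ ^ 2 * (l ^ (2*σ))^2 / l ^ 2 := by
    rw [← hpow]
    field_simp
  rw [show (2:ℝ) - 4*σ = (2:ℝ) - 4*σ from rfl]
  rw [hdiv]
  have hc2 : Real.cos (m*l*t)^2 = 1 - Real.sin (m*l*t)^2 := by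
    have := Real.sin_sq_add_cos_sq (m*l*t); linarith
  have hs2 : Real.sin (2*m*l*t) = 2 * Real.sin (m*l*t) * Real.cos (m*l*t) := by
    rw [show (2:ℝ)*m*l*t = 2*(m*l*t) by ring, Real.sin_two_mul]
  have hc2m : Real.cos (2*m*l*t) = 2 * Real.cos (m*l*t)^2 - 1 := by
    rw [show (2:ℝ)*m*l*t = 2*(m*l*t) by ring, Real.cos_two_mul]
  rw [hs2, hc2m, hc2, hc]
  have hl0 : (l:ℝ) ≠ 0 := ne_of_gt hl
  field_simp
  ring
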